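/- Let S ⊆ ℝ satisfy the three P_INT axioms. Then there exists an order automorphism g of ℝ (a strictly increasing bijection g : ℝ → ℝ) such that the image g(S) equals ℤ. -/
import Mathlib


/-- The three P_INT axioms for a set `S ⊆ ℝ`:
(Isolation) every real `x` has a neighbourhood `(y, z)` in which the only
possible element of `S` is `x` itself;
(Successor) every real `x` has a least element of `S` strictly above it;
(Predecessor) every real `x` has a greatest element of `S` strictly below it. -/
def PIntAxioms (S : Set ℝ) : Prop :=
  (∀ x : ℝ, ∃ y z : ℝ, y < x ∧ x < z ∧ ∀ t ∈ S, y < t → t < z → t = x) ∧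
  (∀ x : ℝ, ∃ y : ℝ, x < y ∧ y ∈ S ∧ ∀ t ∈ S, ¬(x < t ∧ t < y)) ∧
  (∀ x : ℝ, ∃ y : ℝ, y < x ∧ y ∈ S ∧ ∀ t ∈ S, ¬(y < t ∧ t < x))

/-- Iterate a function `k` times starting from `s0`. -/
noncomputable def pintIter (F : ℝ → ℝ) (s0 : ℝ) : ℕ → ℝ
  | 0 => s0
  | k + 1 => F (pintIter F s0 k)

/-- Enumeration of a P_INT set indexed by ℤ. -/
noncomputable def pintF (nxt prv : ℝ → ℝ) (s0 : ℝ) (n : ℤ) : ℝ :=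
  if 0 ≤ n then pintIter nxt s0 n.toNat else pintIter prv s0 (-n).toNat

/-- Piecewise linear map sending `n` to `f n`. -/
noncomputable def pintG (f : ℤ → ℝ) (r : ℝ) : ℝ :=
  f ⌊r⌋ + (r - ⌊r⌋) * (f (⌊r⌋ + 1) - f ⌊r⌋)

/-- If `S ⊆ ℝ` satisfies the three P_INT axioms, then there is an order
automorphism of `ℝ` mapping `S` onto the set of integers. -/
theorem pint_automorphism_to_int (S : Set ℝ) (h : PIntAxioms S) :
    ∃ g : ℝ ≃o ℝ, g '' S = Set.range ((↑) : ℤ → ℝ) := by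
  obtain ⟨hiso, hsucc, hpred⟩ := h
  choose nxt hnxt_lt hnxt_mem hnxt_min using hsucc
  choose prv hprv_lt hprv_mem hprv_max using hpred
  -- uniqueness characterization of nxt
  have nxt_eq : ∀ a y : ℝ, y ∈ S → a < y → (∀ t ∈ S, ¬(a < t ∧ t < y)) → nxt a = y := by
    intro a y hy hay hmin
    rcases lt_trichotomy (nxt a) y with hlt | heq | hgt
    · exact absurd ⟨hnxt_lt a, hlt⟩ (hmin (nxt a) (hnxt_mem a))
    · exact heq
    · exact absurd ⟨hay, hgt⟩ (hnxt_min a y hy)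
  have nxt_prv : ∀ x ∈ S, nxt (prv x) = x := by
    intro x hx
    exact nxt_eq (prv x) x hx (hprv_lt x) (fun t ht => hprv_max x t ht)
  set s0 : ℝ := nxt 0 with hs0
  have hs0S : s0 ∈ S := hnxt_mem 0
  set f : ℤ → ℝ := pintF nxt prv s0 with hfdef
  -- membership
  have hiterN : ∀ k : ℕ, pintIter nxt s0 k ∈ S := by
    intro k; induction k with
    | zero => exact hs0S
    | succ k ih => exact hnxt_mem _
  have hiterP : ∀ k : ℕ, pintIter prv s0 k ∈ S := by
    intro k; induction k with
    | zero => exact hs0S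
    | succ k ih => exact hprv_mem _
  have hf_mem : ∀ n : ℤ, f n ∈ S := by
    intro n
    simp only [hfdef, pintF]
    split <;> [exact hiterN _; exact hiterP _]
  -- recurrence
  have hf_succ : ∀ n : ℤ, f (n + 1) = nxt (f n) := by
    intro n
    rcases le_or_gt 0 n with hn | hn
    · have h1 : (0:ℤ) ≤ n + 1 := by omega
      have h2 : (n + 1).toNat = n.toNat + 1 := by omega
      simp only [hfdef, pintF, if_pos hn, if_pos h1, h2, pintIter]
    · -- n < 0, so f n = prv (f (n+1))
      have hfn : f n = prv (f (n + 1)) := by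
        rcases eq_or_lt_of_le (by omega : n + 1 ≤ 0) with he | hl
        · have hn1 : n = -1 := by omega
          subst hn1
          simp only [hfdef, pintF]
          norm_num [pintIter]
        · have h2 : (-n).toNat = (-(n + 1)).toNat + 1 := by omega
          simp only [hfdef, pintF, if_neg (by omega : ¬ (0:ℤ) ≤ n),
            if_neg (by omega : ¬ (0:ℤ) ≤ n + 1), h2, pintIter]
      rw [hfn, nxt_prv _ (hf_mem (n + 1))]
  have hf_lt : ∀ n : ℤ, f n < f (n + 1) := by
    intro n; rw [hf_succ]; exact hnxt_lt _
  have hmono : StrictMono f := strictMono_int_of_lt_succ hf_lt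
  -- unbounded above
  have hub : ∀ x : ℝ, ∃ n : ℤ, x < f n := by
    intro x
    by_contra hbd
    push_neg at hbd
    have hbdd : BddAbove (Set.range f) := ⟨x, by rintro _ ⟨n, rfl⟩; exact hbd n⟩
    set c := sSup (Set.range f) with hc
    have hle : ∀ n : ℤ, f n ≤ c := fun n => le_csSup hbdd ⟨n, rfl⟩
    have hlt : ∀ n : ℤ, f n < c := fun n => lt_of_lt_of_le (hmono (lt_add_one n)) (hle (n + 1))
    obtain ⟨y, z, hy, hz, huniq⟩ := hiso c
    obtain ⟨r, ⟨n, rfl⟩, hyr⟩ := exists_lt_of_lt_csSup (Set.range_nonempty f) hy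
    exact absurd (huniq (f n) (hf_mem n) hyr (lt_trans (hlt n) hz)) (ne_of_lt (hlt n))
  -- unbounded below
  have hlb : ∀ x : ℝ, ∃ n : ℤ, f n < x := by
    intro x
    by_contra hbd
    push_neg at hbd
    have hbdd : BddBelow (Set.range f) := ⟨x, by rintro _ ⟨n, rfl⟩; exact hbd n⟩
    set c := sInf (Set.range f) with hc
    have hle : ∀ n : ℤ, c ≤ f n := fun n => csInf_le hbdd ⟨n, rfl⟩
    have hlt : ∀ n : ℤ, c < f n := by
      intro n
      calc c ≤ f (n - 1) := hle (n - 1)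
        _ < f n := by have := hmono (show n - 1 < n by omega); exact this
    obtain ⟨y, z, hy, hz, huniq⟩ := hiso c
    obtain ⟨r, ⟨n, rfl⟩, hrz⟩ := exists_lt_of_csInf_lt (Set.range_nonempty f) hz
    exact absurd (huniq (f n) (hf_mem n) (lt_trans hy (hlt n)) hrz) (ne_of_gt (hlt n))
  -- bracket lemma
  have hbr : ∀ x : ℝ, ∃ n : ℤ, f n ≤ x ∧ x < f (n + 1) := by
    intro x
    obtain ⟨m, hm⟩ := hub x
    obtain ⟨l, hl⟩ := hlb x
    obtain ⟨n, hn, hmax⟩ := Int.exists_greatest_of_bdd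
      (P := fun n => f n ≤ x)
      ⟨m, fun z hz => le_of_lt (hmono.lt_iff_lt.mp (lt_of_le_of_lt hz hm))⟩
      ⟨l, le_of_lt hl⟩
    refine ⟨n, hn, ?_⟩
    by_contra hcon
    push_neg at hcon
    have := hmax (n + 1) hcon
    omega
  -- coverage
  have hcov : ∀ s ∈ S, ∃ n : ℤ, f n = s := by
    intro s hs
    obtain ⟨n, hle, hlt⟩ := hbr s
    refine ⟨n, ?_⟩
    rcases eq_or_lt_of_le hle with he | hl
    · exact he
    · exact absurd ⟨hl, hf_succ n ▸ hlt⟩ (hnxt_min (f n) s hs)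
  have hd : ∀ n : ℤ, 0 < f (n + 1) - f n := fun n => sub_pos.mpr (hf_lt n)
  -- the piecewise linear map
  set G : ℝ → ℝ := pintG f with hGdef
  have hGmono : StrictMono G := by
    intro r r' hrr
    have h1 : ⌊r⌋ ≤ ⌊r'⌋ := Int.floor_le_floor hrr.le
    rcases eq_or_lt_of_le h1 with he | hfl
    · simp only [hGdef, pintG, ← he]
      have hd' := hd ⌊r⌋
      nlinarith
    · have hfr1 : r - ⌊r⌋ < 1 := by
        have := Int.sub_one_lt_floor r; linarith
      have hfr0 : (0:ℝ) ≤ r' - ⌊r'⌋ := by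
        have := Int.floor_le r'; linarith
    -- G r < f (⌊r⌋+1) ≤ f ⌊r'⌋ ≤ G r'
      have key1 : G r < f (⌊r⌋ + 1) := by
        simp only [hGdef, pintG]
        have hd' := hd ⌊r⌋
        nlinarith
      have key2 : f (⌊r⌋ + 1) ≤ f ⌊r'⌋ := hmono.monotone (by omega)
      have key3 : f ⌊r'⌋ ≤ G r' := by
        simp only [hGdef, pintG]
        have hd' := hd ⌊r'⌋
        nlinarith
      linarith
  have hGsurj : Function.Surjective G := by
    intro x
    obtain ⟨n, hle, hlt⟩ := hbr x
    have hd' := hd n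
    set q : ℝ := (x - f n) / (f (n + 1) - f n) with hq
    have hq0 : 0 ≤ q := div_nonneg (by linarith) hd'.le
    have hq1 : q < 1 := (div_lt_one hd').mpr (by linarith)
    refine ⟨(n : ℝ) + q, ?_⟩
    have hfl : ⌊(n : ℝ) + q⌋ = n := by
      rw [Int.floor_eq_iff]
      constructor
      · linarith
      · linarith
    simp only [hGdef, pintG, hfl]
    have : q * (f (n + 1) - f n) = x - f n := by
      rw [hq, div_mul_cancel₀ _ hd'.ne']
    linarith [this]
  set e : ℝ ≃o ℝ := StrictMono.orderIsoOfSurjective G hGmono hGsurj with he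
  have hecoe : ∀ r : ℝ, e r = G r := fun r => rfl
  have hGint : ∀ n : ℤ, G (n : ℝ) = f n := by
    intro n
    simp [hGdef, pintG, Int.floor_intCast]
  have hEimg : e '' (Set.range ((↑) : ℤ → ℝ)) = S := by
    ext x
    constructor
    · rintro ⟨_, ⟨n, rfl⟩, rfl⟩
      rw [hecoe, hGint]
      exact hf_mem n
    · intro hx
      obtain ⟨n, hn⟩ := hcov x hx
      exact ⟨(n : ℝ), ⟨n, rfl⟩, by rw [hecoe, hGint, hn]⟩
  refine ⟨e.symm, ?_⟩
  rw [← hEimg]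
  ext x
  simp only [Set.mem_image]
  constructor
  · rintro ⟨_, ⟨y, hy, rfl⟩, rfl⟩
    simpa using hy
  · intro hx
    exact ⟨e x, ⟨x, hx, rfl⟩, by simp⟩
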